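/- arXiv:2309.06785 — 2 statements merged into one kernel-verified Lean document; each statement's English description precedes it below -/
import Mathlib

section
/- Let G ≤ H be subgroups of a Hausdorff topological group X. If G is a co-key subgroup of H (with its subspace topology), then G is a co-key subgroup of X. -/
open Topology Pointwise

/-- Subspace topology induced on a subgroup `H` by a topology `t` on `G`. -/
def subTop {G : Type*} [Group G] (t : TopologicalSpace G) (H : Subgroup G) :
    TopologicalSpace H :=
  t.induced ((↑) : H → G)

/-- Quotient topology on the coset space `G ⧸ H` induced by a topology `t` on `G`. -/
def quotTop {G : Type*} [Group G] (t : TopologicalSpace G) (H : Subgroup G) :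
    TopologicalSpace (G ⧸ H) :=
  t.coinduced (QuotientGroup.mk : G → G ⧸ H)

/-- `H` is a key subgroup of `(G, γ)`: every coarser Hausdorff group topology `γ₁`
(`γ ≤ γ₁` in Mathlib's order means `γ₁` is coarser than `γ`) inducing the original
subspace topology on `H` coincides with `γ`. -/
def IsKey {G : Type*} [Group G] (γ : TopologicalSpace G) (H : Subgroup G) : Prop :=
  ∀ γ₁ : TopologicalSpace G, γ ≤ γ₁ → @IsTopologicalGroup G γ₁ _ → @T2Space G γ₁ →
    subTop γ₁ H = subTop γ H → γ₁ = γ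

/-- `H` is a co-key subgroup of `(G, γ)`: every coarser Hausdorff group topology `γ₁`
inducing the original quotient topology on `G ⧸ H` coincides with `γ`. -/
def IsCoKey {G : Type*} [Group G] (γ : TopologicalSpace G) (H : Subgroup G) : Prop :=
  ∀ γ₁ : TopologicalSpace G, γ ≤ γ₁ → @IsTopologicalGroup G γ₁ _ → @T2Space G γ₁ →
    quotTop γ₁ H = quotTop γ H → γ₁ = γ

/-- `H` is relatively minimal in `(G, γ)`: every coarser Hausdorff group topology on `G`
induces the original subspace topology on `H`. -/
def IsRelMin {G : Type*} [Group G] (γ : TopologicalSpace G) (H : Subgroup G) : Prop :=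
  ∀ γ₁ : TopologicalSpace G, γ ≤ γ₁ → @IsTopologicalGroup G γ₁ _ → @T2Space G γ₁ →
    subTop γ₁ H = subTop γ H

/-- `H` is co-minimal in `(G, γ)`: every coarser Hausdorff group topology on `G`
induces the original quotient topology on the coset space `G ⧸ H`. -/
def IsCoMin {G : Type*} [Group G] (γ : TopologicalSpace G) (H : Subgroup G) : Prop :=
  ∀ γ₁ : TopologicalSpace G, γ ≤ γ₁ → @IsTopologicalGroup G γ₁ _ → @T2Space G γ₁ →
    quotTop γ₁ H = quotTop γ H

/-- `(X, γ)` is a minimal topological group: no strictly coarser Hausdorff group topology. -/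
def IsMinimalGroup {X : Type*} [Group X] (γ : TopologicalSpace X) : Prop :=
  ∀ γ₁ : TopologicalSpace X, γ ≤ γ₁ → @IsTopologicalGroup X γ₁ _ → @T2Space X γ₁ → γ₁ = γ

section Aux

variable {X : Type*} [Group X]

/-- Saturation of an open set under a subgroup is open. -/
lemma auxSatOpen [TopologicalSpace X] [ContinuousMul X]
    (H : Subgroup X) {T : Set X} (hT : IsOpen T) :
    IsOpen ((QuotientGroup.mk : X → X ⧸ H) ⁻¹' (QuotientGroup.mk '' T)) := by
  rw [QuotientGroup.preimage_image_mk]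
  exact isOpen_iUnion fun h => hT.preimage (continuous_mul_right _)

/-- Split a neighborhood of 1 as an open set V with `a⁻¹ * b ∈ U` for `a b ∈ V`. -/
lemma auxInvSplit [TopologicalSpace X] [IsTopologicalGroup X] {U : Set X}
    (hU : U ∈ 𝓝 (1 : X)) :
    ∃ V : Set X, IsOpen V ∧ (1 : X) ∈ V ∧ ∀ a ∈ V, ∀ b ∈ V, a⁻¹ * b ∈ U := by
  obtain ⟨W, hWo, hW1, hWU⟩ := exists_open_nhds_one_mul_subset hU
  refine ⟨W ∩ W⁻¹, hWo.inter (hWo.preimage continuous_inv), ⟨hW1, by simpa using hW1⟩, ?_⟩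
  rintro a ⟨-, ha⟩ b ⟨hb, -⟩
  exact hWU (Set.mul_mem_mul (by simpa using ha) hb)

/-- Merson's Lemma. -/
lemma merson (γ σ : TopologicalSpace X)
    (hγ : @IsTopologicalGroup X γ _) (hσ : @IsTopologicalGroup X σ _)
    (hle : γ ≤ σ) (H : Subgroup X)
    (hsub : subTop σ H = subTop γ H) (hquot : quotTop σ H = quotTop γ H) :
    σ = γ := by
  refine IsTopologicalGroup.ext hσ hγ (le_antisymm ?_ (nhds_mono hle))
  intro U hU
  -- step 1 : V open in γ, 1 ∈ V, V*V ⊆ U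
  obtain ⟨V, hVo, hV1, hVU⟩ :
      ∃ V : Set X, IsOpen[γ] V ∧ (1 : X) ∈ V ∧ V * V ⊆ U := by
    letI := γ; haveI := hγ
    exact exists_open_nhds_one_mul_subset hU
  -- step 2 : O ∈ 𝓝σ 1 with elements of O ∩ H in V
  obtain ⟨O, hO, hOV⟩ : ∃ O ∈ @nhds X σ 1, ∀ x : H, (x : X) ∈ O → (x : X) ∈ V := by
    have hc : Filter.comap ((↑) : H → X) (@nhds X σ 1) =
        Filter.comap ((↑) : H → X) (@nhds X γ 1) := by
      have h1 : @nhds H (subTop σ H) 1 = @nhds H (subTop γ H) 1 := by rw [hsub]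
      rw [subTop, subTop, @nhds_induced, @nhds_induced] at h1
      simpa using h1
    have hmem : ((↑) : H → X) ⁻¹' V ∈ Filter.comap ((↑) : H → X) (@nhds X σ 1) := by
      rw [hc]
      letI := γ
      exact Filter.preimage_mem_comap (hVo.mem_nhds hV1)
    obtain ⟨O, hO, hOsub⟩ := Filter.mem_comap.1 hmem
    exact ⟨O, hO, fun x hx => hOsub hx⟩
  -- step 3 : O₁ σ-open nbhd of 1 with a⁻¹ * b ∈ O for a, b ∈ O₁
  obtain ⟨O₁, hO₁o, hO₁1, hO₁⟩ :
      ∃ O₁ : Set X, IsOpen[σ] O₁ ∧ (1 : X) ∈ O₁ ∧ ∀ a ∈ O₁, ∀ b ∈ O₁, a⁻¹ * b ∈ O := by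
    letI := σ; haveI := hσ
    exact auxInvSplit hO
  -- step 4 : T := V ∩ O₁ is γ-open; its saturation W is γ-open hence σ-open
  set T : Set X := V ∩ O₁ with hT
  have hTo : IsOpen[γ] T := by
    letI := γ
    exact hVo.inter (hO₁o.mono hle)
  set W : Set X := (QuotientGroup.mk : X → X ⧸ H) ⁻¹' (QuotientGroup.mk '' T) with hW
  have hWγ : IsOpen[γ] W := by
    letI := γ; haveI := hγ
    exact auxSatOpen H hTo
  have hWσ : IsOpen[σ] W := by
    have h1 : IsOpen[quotTop γ H] ((QuotientGroup.mk : X → X ⧸ H) '' T) := hWγ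
    rw [← hquot] at h1
    exact h1
  have h1W : (1 : X) ∈ W := ⟨1, ⟨hV1, hO₁1⟩, rfl⟩
  -- step 5 : W ∩ O₁ ⊆ U
  have hsubU : W ∩ O₁ ⊆ U := by
    rintro x ⟨hxW, hxO₁⟩
    obtain ⟨t, htT, hqt⟩ := hxW
    have hmem : t⁻¹ * x ∈ H := QuotientGroup.eq.1 hqt
    have hOmem : t⁻¹ * x ∈ O := hO₁ t htT.2 x hxO₁
    have hVmem : t⁻¹ * x ∈ V := hOV ⟨t⁻¹ * x, hmem⟩ hOmem
    have : t * (t⁻¹ * x) ∈ V * V := Set.mul_mem_mul htT.1 hVmem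
    simpa using hVU this
  letI := σ
  exact Filter.mem_of_superset
    (Filter.inter_mem (hWσ.mem_nhds h1W) (hO₁o.mem_nhds hO₁1)) hsubU


/-- The natural injection `B ⧸ (A.subgroupOf B) → X ⧸ A`. -/
def quotInc (A B : Subgroup X) (hAB : A ≤ B) : B ⧸ A.subgroupOf B → X ⧸ A :=
  fun x => Quotient.liftOn' x (fun b => (QuotientGroup.mk (b : X) : X ⧸ A))
    (fun a b hab => QuotientGroup.eq.2 (by
      have h1 := QuotientGroup.leftRel_apply.1 hab
      simpa [Subgroup.mem_subgroupOf] using h1))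

lemma quotInc_mk (A B : Subgroup X) (hAB : A ≤ B) (b : B) :
    quotInc A B hAB (QuotientGroup.mk b) = QuotientGroup.mk (b : X) := rfl

/-- The quotient topology on `B ⧸ A.subgroupOf B` coming from the subspace topology on `B`
is induced by the natural injection into `X ⧸ A` with its quotient topology. -/
lemma quot_sub_eq (γ : TopologicalSpace X) (hγ : @ContinuousMul X γ _)
    (A B : Subgroup X) (hAB : A ≤ B) :
    quotTop (subTop γ B) (A.subgroupOf B) =
      (quotTop γ A).induced (quotInc A B hAB) := by
  apply le_antisymm
  · rw [quotTop, coinduced_le_iff_le_induced, induced_compose]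
    have hcomp : quotInc A B hAB ∘ (QuotientGroup.mk : B → B ⧸ A.subgroupOf B)
        = (QuotientGroup.mk : X → X ⧸ A) ∘ ((↑) : B → X) := rfl
    rw [hcomp, ← induced_compose]
    exact induced_mono (continuous_iff_le_induced.1
      (@continuous_coinduced_rng X (X ⧸ A) (QuotientGroup.mk : X → X ⧸ A) γ))
  · rw [TopologicalSpace.le_def]
    intro S hS
    have hS' : IsOpen[subTop γ B]
        ((QuotientGroup.mk : B → B ⧸ A.subgroupOf B) ⁻¹' S) := isOpen_coinduced.1 hS
    rw [subTop, isOpen_induced_iff] at hS'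
    obtain ⟨W, hWo, hWeq⟩ := hS'
    have hWopen : IsOpen[quotTop γ A] ((QuotientGroup.mk : X → X ⧸ A) '' W) := by
      rw [quotTop, isOpen_coinduced]
      letI := γ; haveI := hγ
      exact auxSatOpen A hWo
    refine isOpen_induced_iff.2 ⟨_, hWopen, ?_⟩
    ext x
    induction' x using QuotientGroup.induction_on with b
    rw [Set.mem_preimage, quotInc_mk]
    constructor
    · rintro ⟨w, hwW, hweq⟩
      have ha : w⁻¹ * (b : X) ∈ A := QuotientGroup.eq.1 hweq
      have hwB : w ∈ B := by
        have : w = (b : X) * (w⁻¹ * (b : X))⁻¹ := by group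
        rw [this]
        exact B.mul_mem b.2 (B.inv_mem (hAB ha))
      have hmem : (⟨w, hwB⟩ : B) ∈ ((QuotientGroup.mk : B → B ⧸ A.subgroupOf B) ⁻¹' S) := by
        rw [← hWeq]; exact hwW
      have hq : (QuotientGroup.mk (⟨w, hwB⟩ : B) : B ⧸ A.subgroupOf B) = QuotientGroup.mk b :=
        QuotientGroup.eq.2 (by simpa [Subgroup.mem_subgroupOf] using ha)
      have hmem' : (QuotientGroup.mk (⟨w, hwB⟩ : B) : B ⧸ A.subgroupOf B) ∈ S := hmem
      rwa [hq] at hmem'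
    · intro hb
      have : b ∈ ((QuotientGroup.mk : B → B ⧸ A.subgroupOf B) ⁻¹' S) := hb
      rw [← hWeq] at this
      exact ⟨(b : X), this, rfl⟩

/-- If two topologies give the same quotient topology mod `A`, they give the same
quotient topology mod any larger subgroup `B`. -/
lemma quotTop_comp (γ δ : TopologicalSpace X) (A B : Subgroup X) (hAB : A ≤ B)
    (h : quotTop γ A = quotTop δ A) : quotTop γ B = quotTop δ B := by
  let g : X ⧸ A → X ⧸ B := fun x => Quotient.liftOn' x (QuotientGroup.mk : X → X ⧸ B)
    (fun a b hab => QuotientGroup.eq.2 (hAB (QuotientGroup.leftRel_apply.1 hab)))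
  have key : ∀ t : TopologicalSpace X, quotTop t B = (quotTop t A).coinduced g := by
    intro t
    rw [quotTop, quotTop, coinduced_compose]
    congr 1
  rw [key γ, key δ, h]

lemma subTop_topGroup (γ : TopologicalSpace X) (hγ : @IsTopologicalGroup X γ _)
    (B : Subgroup X) : @IsTopologicalGroup B (subTop γ B) _ := by
  letI := γ; haveI := hγ
  show IsTopologicalGroup B
  infer_instance

lemma subTop_t2 (γ : TopologicalSpace X) (hγ : @T2Space X γ)
    (B : Subgroup X) : @T2Space B (subTop γ B) := by
  letI := γ; haveI := hγ
  show T2Space B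
  infer_instance

end Aux

/-- If `A ≤ B` are subgroups of `X` and `A` is co-key in `B` (with the subspace topology),
then `A` is co-key in `X`. -/
theorem isCoKey_of_isCoKey_subgroup {X : Type*} [Group X] (τ : TopologicalSpace X)
    (hτ : @IsTopologicalGroup X τ _) (hT2 : @T2Space X τ)
    (A B : Subgroup X) (hle : A ≤ B)
    (h : IsCoKey (subTop τ B) (A.subgroupOf B)) :
    IsCoKey τ A := by
  intro σ hτσ hσgrp hσT2 hq
  have hBsub : subTop σ B = subTop τ B := by
    apply h (subTop σ B) (induced_mono hτσ) (subTop_topGroup σ hσgrp B) (subTop_t2 σ hσT2 B)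
    rw [quot_sub_eq σ hσgrp.toContinuousMul A B hle,
        quot_sub_eq τ hτ.toContinuousMul A B hle, hq]
  have hBquot : quotTop σ B = quotTop τ B := quotTop_comp σ τ A B hle hq
  exact merson τ σ hτ hσgrp hτσ B hBsub hBquot
end

section
/- Let H be a central subgroup of a Hausdorff topological group (G, γ). Then H is inj-key in G if and only if H is co-minimal in G. -/
open Topology Pointwise

/-- `H` is inj-key in `(G, γ)`: the restriction map on coarser Hausdorff group topologies
is injective. -/
def IsInjKey {G : Type*} [Group G] (γ : TopologicalSpace G) (H : Subgroup G) : Prop :=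
  ∀ γ₁ γ₂ : TopologicalSpace G, γ ≤ γ₁ → γ ≤ γ₂ →
    @IsTopologicalGroup G γ₁ _ → @IsTopologicalGroup G γ₂ _ →
    @T2Space G γ₁ → @T2Space G γ₂ →
    subTop γ₁ H = subTop γ₂ H → γ₁ = γ₂

/-- Pulling back a group topology along a group homomorphism yields a group topology. -/
theorem aux_induced_group {A B : Type*} [Group A] [Group B] (tB : TopologicalSpace B)
    (hB : @IsTopologicalGroup B tB _) (f : A →* B) :
    @IsTopologicalGroup A (tB.induced f) _ := by
  letI := tB; haveI := hB
  exact topologicalGroup_induced f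

/-- **Merson's Lemma**: if a group topology `t` is finer than a group topology `s`, and
they induce the same subspace topology on `H` and the same quotient topology on the coset
space `G ⧸ H`, then `t = s`. -/
theorem merson_lemma {G : Type*} [Group G] (H : Subgroup G) (t s : TopologicalSpace G)
    (ht : @IsTopologicalGroup G t _) (hs : @IsTopologicalGroup G s _)
    (hle : t ≤ s)
    (hsub : subTop t H = subTop s H) (hquot : quotTop t H = quotTop s H) :
    t = s := by
  refine IsTopologicalGroup.ext ht hs (le_antisymm (nhds_mono hle) ?_)
  intro W hW
  -- choose a `t`-open `V` with `V * V ⊆ W`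
  obtain ⟨V, Vo, V1, hV⟩ :
      ∃ V : Set G, IsOpen[t] V ∧ (1 : G) ∈ V ∧ ∀ v ∈ V, ∀ w ∈ V, v * w ∈ W := by
    letI := t; haveI := ht; exact exists_open_nhds_one_split hW
  have hVn : V ∈ @nhds G t 1 := by letI := t; exact Vo.mem_nhds V1
  -- equality of neighborhood filters on H
  have hcomap : Filter.comap ((↑) : H → G) (@nhds G t 1)
      = Filter.comap ((↑) : H → G) (@nhds G s 1) := by
    have e1 : @nhds H (subTop t H) 1
        = Filter.comap ((↑) : H → G) (@nhds G t ((1 : H) : G)) :=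
      @nhds_induced G H t ((↑) : H → G) 1
    have e2 : @nhds H (subTop s H) 1
        = Filter.comap ((↑) : H → G) (@nhds G s ((1 : H) : G)) :=
      @nhds_induced G H s ((↑) : H → G) 1
    rw [hsub, e2] at e1
    simpa using e1.symm
  -- get `U ∈ 𝓝_s 1` with `U ∩ H ⊆ V`
  have hVH : ((↑) : H → G) ⁻¹' V ∈ Filter.comap ((↑) : H → G) (@nhds G s 1) := by
    rw [← hcomap]; exact Filter.preimage_mem_comap hVn
  obtain ⟨U, hU, hUV⟩ := Filter.mem_comap.mp hVH
  -- choose `U₁ ∈ 𝓝_s 1` with `U₁⁻¹ * U₁ ⊆ U`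
  obtain ⟨U₁, hU₁, hU₁U⟩ :
      ∃ U₁ ∈ @nhds G s 1, ∀ v ∈ U₁, ∀ x ∈ U₁, v⁻¹ * x ∈ U := by
    letI := s; haveI := hs
    obtain ⟨U₂, hU₂, hsplit⟩ := exists_nhds_one_split hU
    refine ⟨U₂ ∩ U₂⁻¹, Filter.inter_mem hU₂ (inv_mem_nhds_one G hU₂), ?_⟩
    intro v hv x hx
    exact hsplit _ (Set.mem_inv.mp hv.2) _ hx.1
  have hU₁t : U₁ ∈ @nhds G t 1 := nhds_mono hle hU₁
  -- `O`: a `t`-open neighborhood of 1 inside `V ∩ U₁`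
  obtain ⟨O, hOsub, Oo, O1⟩ :
      ∃ O : Set G, O ⊆ V ∩ U₁ ∧ IsOpen[t] O ∧ (1 : G) ∈ O := by
    letI := t
    exact mem_nhds_iff.mp (Filter.inter_mem hVn hU₁t)
  -- the saturation `O * H` is `s`-open
  set A : Set G := O * (H : Set G) with hA
  have hAsat : (QuotientGroup.mk : G → G ⧸ H) ⁻¹'
      ((QuotientGroup.mk : G → G ⧸ H) '' A) = A := by
    ext x
    simp only [Set.mem_preimage, Set.mem_image]
    constructor
    · rintro ⟨y, hy, hxy⟩
      obtain ⟨o, ho, h, hh, rfl⟩ := hy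
      have hmem : (o * h)⁻¹ * x ∈ H := (QuotientGroup.eq ..).mp hxy
      have hx : x = o * (h * ((o * h)⁻¹ * x)) := by group
      rw [hx]
      exact Set.mul_mem_mul ho (H.mul_mem hh hmem)
    · intro hx; exact ⟨x, hx, rfl⟩
  have hAopen_t : IsOpen[t] A := by
    letI := t; haveI := ht
    rw [hA]
    exact Oo.mul_right
  have hAopen_q : IsOpen[quotTop t H] ((QuotientGroup.mk : G → G ⧸ H) '' A) := by
    rw [quotTop, isOpen_coinduced, hAsat]; exact hAopen_t
  have hAopen_s : IsOpen[s] A := by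
    rw [hquot] at hAopen_q
    rw [quotTop, isOpen_coinduced, hAsat] at hAopen_q
    exact hAopen_q
  have hA1 : (1 : G) ∈ A := ⟨1, O1, 1, H.one_mem, mul_one 1⟩
  have hAmem : A ∈ @nhds G s 1 := by letI := s; exact hAopen_s.mem_nhds hA1
  -- conclude : `A ∩ U₁ ⊆ W`
  refine Filter.mem_of_superset (Filter.inter_mem hAmem hU₁) ?_
  rintro x ⟨hxA, hxU₁⟩
  obtain ⟨o, ho, h, hh, rfl⟩ := hxA
  have hoVU : o ∈ V ∩ U₁ := hOsub ho
  have hhU : h ∈ U := by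
    have := hU₁U o hoVU.2 (o * h) hxU₁
    simpa using this
  have hhV : h ∈ V := hUV (show ((⟨h, hh⟩ : H) : G) ∈ U from hhU)
  exact hV o hoVU.1 h hhV

/-- A central subgroup is inj-key iff it is co-minimal. -/
theorem central_isInjKey_iff_isCoMin {G : Type*} [Group G] (γ : TopologicalSpace G)
    (hγ : @IsTopologicalGroup G γ _) (hT2 : @T2Space G γ)
    (H : Subgroup G) (hc : H ≤ Subgroup.center G) :
    IsInjKey γ H ↔ IsCoMin γ H := by
  haveI hN : H.Normal := by
    constructor
    intro h hh g
    have : g * h * g⁻¹ = h := by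
      rw [(Subgroup.mem_center_iff.mp (hc hh) g)]
      group
    rw [this]; exact hh
  constructor
  · -- inj-key → co-minimal
    intro hinj τ hleτ hτg hτ2
    -- group topology on the quotient
    have hq : @IsTopologicalGroup (G ⧸ H) (quotTop γ H) _ := by
      letI := γ; haveI := hγ
      exact QuotientGroup.instIsTopologicalGroup H
    set D : TopologicalSpace G :=
      (quotTop γ H).induced (QuotientGroup.mk : G → G ⧸ H) with hD
    have hγD : γ ≤ D := (gc_coinduced_induced (QuotientGroup.mk : G → G ⧸ H)).le_u_l γ
    have hDg : @IsTopologicalGroup G D _ :=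
      aux_induced_group (quotTop γ H) hq (QuotientGroup.mk' H)
    set σ : TopologicalSpace G := τ ⊓ D with hσdef
    have hγσ : γ ≤ σ := le_inf hleτ hγD
    have hσg : @IsTopologicalGroup G σ _ := topologicalGroup_inf hτg hDg
    have hσ2 : @T2Space G σ := by
      have hστ : σ ≤ τ := by rw [hσdef]; exact inf_le_left
      exact t2Space_antitone hστ hτ2
    -- `subTop σ H = subTop τ H`
    have hsublat : TopologicalSpace.induced ((↑) : H → G) τ
        ≤ TopologicalSpace.induced ((↑) : H → G) D := by
      intro u hu
      rw [hD, induced_compose] at hu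
      obtain ⟨v, hv, rfl⟩ := (@isOpen_induced_iff ↥H (G ⧸ H) (quotTop γ H) u
        ((QuotientGroup.mk : G → G ⧸ H) ∘ (Subtype.val : H → G))).mp hu
      letI : TopologicalSpace H := TopologicalSpace.induced ((↑) : H → G) τ
      by_cases h1 : (1 : G ⧸ H) ∈ v
      · have he : ((QuotientGroup.mk : G → G ⧸ H) ∘ (Subtype.val : H → G)) ⁻¹' v
            = Set.univ := by
          ext x
          simp [Function.comp, (QuotientGroup.eq_one_iff (x : G)).mpr x.2, h1]
        rw [he]; exact isOpen_univ
      · have he : ((QuotientGroup.mk : G → G ⧸ H) ∘ (Subtype.val : H → G)) ⁻¹' v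
            = ∅ := by
          ext x
          simp [Function.comp, (QuotientGroup.eq_one_iff (x : G)).mpr x.2, h1]
        rw [he]; exact isOpen_empty
    have hsubστ : subTop τ H = subTop σ H := by
      rw [subTop, subTop, hσdef, induced_inf]
      exact (inf_eq_left.mpr hsublat).symm
    -- inj-key gives τ = σ
    have hτσ : τ = σ := hinj τ σ hleτ hγσ hτg hσg hτ2 hσ2 hsubστ
    have hτD : τ ≤ D := hτσ ▸ inf_le_right
    refine le_antisymm ?_ (coinduced_mono hleτ)
    exact coinduced_le_iff_le_induced.mpr hτD
  · -- co-minimal → inj-key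
    intro hco τ₁ τ₂ h1 h2 g1 g2 t1 t2 hsub
    set ρ : TopologicalSpace G := τ₁ ⊓ τ₂ with hρ
    have hγρ : γ ≤ ρ := le_inf h1 h2
    have hρg : @IsTopologicalGroup G ρ _ := topologicalGroup_inf g1 g2
    have hρ2 : @T2Space G ρ := by
      have hρτ : ρ ≤ τ₁ := by rw [hρ]; exact inf_le_left
      exact t2Space_antitone hρτ t1
    have hsubρ1 : subTop ρ H = subTop τ₁ H := by
      rw [subTop, hρ, induced_inf, ← subTop, ← subTop, ← hsub, inf_idem]
    have hsubρ2 : subTop ρ H = subTop τ₂ H := by rw [hsubρ1, hsub]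
    have hq1 : quotTop ρ H = quotTop τ₁ H := by
      rw [hco ρ hγρ hρg hρ2, hco τ₁ h1 g1 t1]
    have hq2 : quotTop ρ H = quotTop τ₂ H := by
      rw [hco ρ hγρ hρg hρ2, hco τ₂ h2 g2 t2]
    have e1 : ρ = τ₁ := merson_lemma H ρ τ₁ hρg g1 inf_le_left hsubρ1 hq1
    have e2 : ρ = τ₂ := merson_lemma H ρ τ₂ hρg g2 inf_le_right hsubρ2 hq2
    rw [← e1, ← e2]
end
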